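/- For every integer k ≥ 1, any two distinct connected components of C_k are separated by a gap of length at least (1/N)·((N-1)/(2N))^{k-1}. -/

import Mathlib

open Set

/-- ratio (N-1)/(2N) of each half of the middle-1/N Cantor construction -/
noncomputable def cantorRatio (N : ℕ) : ℝ := (N - 1) / (2 * N)

/-- k-th stage C_k of the middle 1/N Cantor set -/
noncomputable def cantorStage (N : ℕ) : ℕ → Set ℝ
  | 0 => Set.Icc 0 1
  | k + 1 => (fun x => cantorRatio N * x) '' cantorStage N k ∪
      (fun x => cantorRatio N * x + (N + 1) / (2 * N)) '' cantorStage N k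

/-- the middle 1/N Cantor set -/
noncomputable def middleCantorSet (N : ℕ) : Set ℝ := ⋂ k, cantorStage N k

/-- number of stages whose removed middle intervals have length at least δ -/
noncomputable def numStages (N : ℕ) (δ : ℝ) : ℕ :=
  sSup {j : ℕ | δ ≤ 1 / N * cantorRatio N ^ (j - 1)}

/-- X_δ : perform only the removal steps removing intervals of length ≥ δ -/
noncomputable def cantorApprox (N : ℕ) (δ : ℝ) : Set ℝ := cantorStage N (numStages N δ)

lemma comp_eq_of_conn {F s : Set ℝ} {x y : ℝ} (hs : IsPreconnected s) (hsF : s ⊆ F)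
    (hx : x ∈ s) (hy : y ∈ s) :
    connectedComponentIn F x = connectedComponentIn F y :=
  connectedComponentIn_eq (hs.subset_connectedComponentIn hx hsF hy)

section
variable {N : ℕ}

lemma castN_pos (hN : 3 ≤ N) : (0:ℝ) < N := by
  have : (3:ℝ) ≤ N := by exact_mod_cast hN
  linarith

lemma ratio_pos (hN : 3 ≤ N) : 0 < cantorRatio N := by
  have : (3:ℝ) ≤ N := by exact_mod_cast hN
  unfold cantorRatio
  apply div_pos <;> linarith

lemma ratio_lt_one (hN : 3 ≤ N) : cantorRatio N < 1 := by
  have : (3:ℝ) ≤ N := by exact_mod_cast hN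
  unfold cantorRatio
  rw [div_lt_one (by linarith)]
  linarith

lemma ratio_add (hN : 3 ≤ N) : cantorRatio N + ((N:ℝ) + 1) / (2 * N) = 1 := by
  have h : (3:ℝ) ≤ N := by exact_mod_cast hN
  have h0 : (N:ℝ) ≠ 0 := by linarith
  unfold cantorRatio
  field_simp
  ring

lemma gap_eq (hN : 3 ≤ N) : ((N:ℝ) + 1) / (2 * N) - cantorRatio N = 1 / N := by
  have h : (3:ℝ) ≤ N := by exact_mod_cast hN
  have h0 : (N:ℝ) ≠ 0 := by linarith
  unfold cantorRatio
  rw [div_sub_div_same, show ((N:ℝ)+1) - ((N:ℝ)-1) = 2 by ring,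
    div_eq_div_iff (by linarith) h0]
  ring

lemma c_pos (hN : 3 ≤ N) : 0 < ((N:ℝ) + 1) / (2 * N) := by
  have : (3:ℝ) ≤ N := by exact_mod_cast hN
  positivity

lemma stage_subset (hN : 3 ≤ N) : ∀ k, cantorStage N k ⊆ Set.Icc 0 1 := by
  intro k
  induction k with
  | zero => exact subset_rfl
  | succ k ih =>
    have hr0 := ratio_pos hN
    have hra := ratio_add hN
    have hc0 := c_pos hN
    rintro z (⟨a, ha, rfl⟩ | ⟨a, ha, rfl⟩) <;>
      obtain ⟨ha0, ha1⟩ := ih ha <;> dsimp only <;> constructor <;>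
      nlinarith [mul_nonneg hr0.le ha0, mul_le_mul_of_nonneg_left ha1 hr0.le]

lemma aux (hN : 3 ≤ N) : ∀ k x y, x ∈ cantorStage N (k+1) → y ∈ cantorStage N (k+1) →
    connectedComponentIn (cantorStage N (k+1)) x ≠ connectedComponentIn (cantorStage N (k+1)) y →
    1 / N * cantorRatio N ^ k ≤ |x - y| := by
  have hr0 := ratio_pos hN
  have hr1 := ratio_lt_one hN
  have hgap := gap_eq hN
  have hra := ratio_add hN
  have hc0 := c_pos hN
  have hNpos := castN_pos hN
  have hNinv : 0 < 1/(N:ℝ) := by positivity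
  have hcontL : Continuous fun x : ℝ => cantorRatio N * x := by continuity
  have hcontR : Continuous fun x : ℝ => cantorRatio N * x + ((N:ℝ) + 1) / (2 * N) := by
    continuity
  intro k
  induction k with
  | zero =>
    intro x y hx hy h
    rcases hx with ⟨a, ha, rfl⟩ | ⟨a, ha, rfl⟩ <;> rcases hy with ⟨b, hb, rfl⟩ | ⟨b, hb, rfl⟩
    · exact absurd (comp_eq_of_conn (isPreconnected_Icc.image _ hcontL.continuousOn)
        subset_union_left ⟨a, ha, rfl⟩ ⟨b, hb, rfl⟩) h
    · obtain ⟨ha0, ha1⟩ := ha; obtain ⟨hb0, hb1⟩ := hb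
      dsimp only
      have h1 : cantorRatio N * a ≤ cantorRatio N :=
        by nlinarith [mul_le_mul_of_nonneg_left ha1 hr0.le]
      have h2 : 0 ≤ cantorRatio N * b := mul_nonneg hr0.le hb0
      rw [abs_sub_comm, abs_of_nonneg (by linarith)]
      simp only [pow_zero, mul_one]
      linarith
    · obtain ⟨ha0, ha1⟩ := ha; obtain ⟨hb0, hb1⟩ := hb
      dsimp only
      have h1 : cantorRatio N * b ≤ cantorRatio N :=
        by nlinarith [mul_le_mul_of_nonneg_left hb1 hr0.le]
      have h2 : 0 ≤ cantorRatio N * a := mul_nonneg hr0.le ha0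
      rw [abs_of_nonneg (by linarith)]
      simp only [pow_zero, mul_one]
      linarith
    · exact absurd (comp_eq_of_conn (isPreconnected_Icc.image _ hcontR.continuousOn)
        subset_union_right ⟨a, ha, rfl⟩ ⟨b, hb, rfl⟩) h
  | succ k ih =>
    intro x y hx hy h
    have hsub := stage_subset hN (k+1)
    have hrk : cantorRatio N ^ (k+1) ≤ 1 := pow_le_one₀ hr0.le hr1.le
    have hpow : 1 / (N:ℝ) * cantorRatio N ^ (k+1) ≤ 1 / N * 1 :=
      mul_le_mul_of_nonneg_left hrk (by positivity)
    rcases hx with ⟨a, ha, rfl⟩ | ⟨a, ha, rfl⟩ <;> rcases hy with ⟨b, hb, rfl⟩ | ⟨b, hb, rfl⟩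
    · -- both left
      have hab : connectedComponentIn (cantorStage N (k+1)) a ≠
          connectedComponentIn (cantorStage N (k+1)) b := by
        intro he
        apply h
        exact comp_eq_of_conn
          ((isPreconnected_connectedComponentIn (x := a)).image _ hcontL.continuousOn)
          (Subset.trans (image_mono (connectedComponentIn_subset _ _)) subset_union_left)
          ⟨a, mem_connectedComponentIn ha, rfl⟩
          ⟨b, he ▸ mem_connectedComponentIn hb, rfl⟩
      have hIH := ih a b ha hb hab
      dsimp only
      have heq : |cantorRatio N * a - cantorRatio N * b| = cantorRatio N * |a - b| := by
        rw [← mul_sub, abs_mul, abs_of_nonneg hr0.le]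
      rw [heq, pow_succ]
      calc 1 / N * (cantorRatio N ^ k * cantorRatio N)
          = cantorRatio N * (1 / N * cantorRatio N ^ k) := by ring
        _ ≤ cantorRatio N * |a - b| := mul_le_mul_of_nonneg_left hIH hr0.le
    · -- left-right
      obtain ⟨ha0, ha1⟩ := hsub ha; obtain ⟨hb0, hb1⟩ := hsub hb
      dsimp only
      have h1 : cantorRatio N * a ≤ cantorRatio N :=
        by nlinarith [mul_le_mul_of_nonneg_left ha1 hr0.le]
      have h2 : 0 ≤ cantorRatio N * b := mul_nonneg hr0.le hb0
      rw [abs_sub_comm, abs_of_nonneg (by linarith)]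
      linarith
    · obtain ⟨ha0, ha1⟩ := hsub ha; obtain ⟨hb0, hb1⟩ := hsub hb
      dsimp only
      have h1 : cantorRatio N * b ≤ cantorRatio N :=
        by nlinarith [mul_le_mul_of_nonneg_left hb1 hr0.le]
      have h2 : 0 ≤ cantorRatio N * a := mul_nonneg hr0.le ha0
      rw [abs_of_nonneg (by linarith)]
      linarith
    · -- both right
      have hab : connectedComponentIn (cantorStage N (k+1)) a ≠
          connectedComponentIn (cantorStage N (k+1)) b := by
        intro he
        apply h
        exact comp_eq_of_conn
          ((isPreconnected_connectedComponentIn (x := a)).image _ hcontR.continuousOn)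
          (Subset.trans (image_mono (connectedComponentIn_subset _ _)) subset_union_right)
          ⟨a, mem_connectedComponentIn ha, rfl⟩
          ⟨b, he ▸ mem_connectedComponentIn hb, rfl⟩
      have hIH := ih a b ha hb hab
      dsimp only
      have heq : |cantorRatio N * a + ((N:ℝ)+1)/(2*N) - (cantorRatio N * b + ((N:ℝ)+1)/(2*N))|
          = cantorRatio N * |a - b| := by
        rw [show cantorRatio N * a + ((N:ℝ)+1)/(2*N) - (cantorRatio N * b + ((N:ℝ)+1)/(2*N))
          = cantorRatio N * (a - b) by ring, abs_mul, abs_of_nonneg hr0.le]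
      rw [heq, pow_succ]
      calc 1 / N * (cantorRatio N ^ k * cantorRatio N)
          = cantorRatio N * (1 / N * cantorRatio N ^ k) := by ring
        _ ≤ cantorRatio N * |a - b| := mul_le_mul_of_nonneg_left hIH hr0.le

end

theorem stmt1 (N : ℕ) (hN : 3 ≤ N) (k : ℕ) (hk : 1 ≤ k)
    (x y : ℝ) (hx : x ∈ cantorStage N k) (hy : y ∈ cantorStage N k)
    (h : connectedComponentIn (cantorStage N k) x ≠ connectedComponentIn (cantorStage N k) y) :
    1 / N * cantorRatio N ^ (k - 1) ≤ |x - y| := by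
  cases k with
  | zero => omega
  | succ m =>
    simpa using aux hN m x y hx hy h
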